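/- Let N be a left near-ring and d a multiplicative derivation of N satisfying d(xy) = d(y)·d(x) for all x, y ∈ N. Then d(x)·x·y = d(x)·y·d(x) for all x, y ∈ N. -/
import Mathlib


class LeftNearRing (N : Type*) extends AddGroup N, Mul N where
  mul_assoc : ∀ a b c : N, a * b * c = a * (b * c)
  left_distrib : ∀ a b c : N, a * (b + c) = a * b + a * c

theorem stmt17 {N : Type*} [LeftNearRing N]
    (d : N → N) (hd : ∀ x y : N, d (x * y) = x * d y + d x * y)
    (hh : ∀ x y : N, d (x * y) = d y * d x) :
    ∀ x y : N, d x * x * y = d x * y * d x := by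
  have ma := LeftNearRing.mul_assoc (N := N)
  have ld := LeftNearRing.left_distrib (N := N)
  -- Wang's partial distributive law
  have wang : ∀ a b c : N, d (a * b) * c = a * d b * c + d a * b * c := by
    intro a b c
    have h1 : d (a * (b * c)) = a * b * d c + (a * d b * c + d a * b * c) := by
      rw [hd a (b * c), hd b c, ld, ma, ma, ma, add_assoc]
    have h2 : d (a * (b * c)) = a * b * d c + d (a * b) * c := by
      rw [← ma, hd (a * b) c]
    exact add_left_cancel (h2.symm.trans h1)
  intro x y
  have h3 : d (x * (x * y)) = x * d y * d x + d x * x * y := by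
    rw [hd x (x * y), hh x y, ← ma, ma (d x) x y]
  have h4 : d (x * (x * y)) = x * d y * d x + d x * y * d x := by
    rw [hh x (x * y), wang x y (d x)]
  exact add_left_cancel (h3.symm.trans h4)
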